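/- A family (P_T)_{T∈ℕ} of Borel probability measures on H is tight if and only if both of the following hold: (i) for every k ≥ 1, lim_{h→∞} sup_{T∈ℕ} P_T({x ∈ H : Σ_{n<k} |⟨x, e_n⟩|² > h}) = 0; and (ii) for every ε > 0, lim_{k→∞} sup_{T∈ℕ} P_T({x ∈ H : Σ_{n≥k} |⟨x, e_n⟩|² > ε}) = 0. -/

import Mathlib

open MeasureTheory ProbabilityTheory Filter
open scoped ENNReal NNReal Topology

set_option linter.unusedSectionVars false
set_option maxHeartbeats 1000000

noncomputable section

namespace Stmt16Aux

variable {𝕜 : Type*} [RCLike 𝕜] {H : Type*} [NormedAddCommGroup H] [InnerProductSpace 𝕜 H]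
  [CompleteSpace H] (e : HilbertBasis ℕ 𝕜 H)

/-- partial sum of squared coefficients -/
def S (k : ℕ) (x : H) : ℝ := ∑ n ∈ Finset.range k, ‖(inner 𝕜 (e n) x : 𝕜)‖ ^ 2

theorem parseval (x : H) : HasSum (fun n => ‖(inner 𝕜 (e n) x : 𝕜)‖ ^ 2) (‖x‖ ^ 2) := by
  have h := (e.hasSum_inner_mul_inner x x).mapL (RCLike.reCLM (K := 𝕜))
  convert h using 2 with n
  · rfl
  · show ‖(inner 𝕜 (e n) x : 𝕜)‖ ^ 2 = RCLike.re ((inner 𝕜 x (e n) : 𝕜) * inner 𝕜 (e n) x)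
    rw [← inner_conj_symm x (e n), RCLike.conj_mul]
    norm_cast
  · show ‖x‖ ^ 2 = RCLike.re (inner 𝕜 x x : 𝕜)
    rw [← inner_self_eq_norm_sq (𝕜 := 𝕜)]

theorem hasSum_tail (k : ℕ) (x : H) :
    HasSum (fun n => if k ≤ n then ‖(inner 𝕜 (e n) x : 𝕜)‖ ^ 2 else 0) (‖x‖ ^ 2 - S e k x) := by
  have h2 : HasSum (fun n => if n < k then ‖(inner 𝕜 (e n) x : 𝕜)‖ ^ 2 else 0) (S e k x) := by
    have := hasSum_sum_of_ne_finset_zero (L := SummationFilter.unconditional ℕ) (s := Finset.range k)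
      (f := fun n => if n < k then ‖(inner 𝕜 (e n) x : 𝕜)‖ ^ 2 else 0)
      (by intro b hb; simp only [Finset.mem_range] at hb; simp [hb])
    convert this using 1
    refine (Finset.sum_congr rfl fun n hn => ?_).symm
    simp [Finset.mem_range.mp hn, S]
  have := (parseval e x).sub h2
  convert this using 2 with n
  · rfl
  by_cases h : k ≤ n
  · simp [h, not_lt.mpr h]
  · simp [h, not_le.mp h]

theorem tsum_tail (k : ℕ) (x : H) :
    ∑' n, (if k ≤ n then ‖(inner 𝕜 (e n) x : 𝕜)‖ ^ 2 else 0) = ‖x‖ ^ 2 - S e k x :=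
  (hasSum_tail e k x).tsum_eq

theorem S_le (k : ℕ) (x : H) : S e k x ≤ ‖x‖ ^ 2 :=
  sum_le_hasSum _ (fun _ _ => by positivity) (parseval e x)

theorem S_mono {k k' : ℕ} (h : k ≤ k') (x : H) : S e k x ≤ S e k' x :=
  Finset.sum_le_sum_of_subset_of_nonneg (Finset.range_subset_range.mpr h)
    (fun _ _ _ => by positivity)

theorem continuous_S (k : ℕ) : Continuous (S e k) := by
  refine continuous_finset_sum _ fun n _ => ?_
  exact ((innerSL 𝕜 (e n)).continuous.norm).pow 2

theorem continuous_tail (k : ℕ) : Continuous (fun x => ‖x‖ ^ 2 - S e k x) :=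
  (continuous_norm.pow 2).sub (continuous_S e k)

theorem tail_nonneg (k : ℕ) (x : H) : 0 ≤ ‖x‖ ^ 2 - S e k x :=
  sub_nonneg.mpr (S_le e k x)

theorem tail_anti {k k' : ℕ} (h : k ≤ k') (x : H) :
    ‖x‖ ^ 2 - S e k' x ≤ ‖x‖ ^ 2 - S e k x :=
  sub_le_sub_left (S_mono e h x) _

/-- pointwise: tails tend to 0 -/
theorem tail_tendsto (x : H) :
    Tendsto (fun k => ‖x‖ ^ 2 - S e k x) atTop (𝓝 0) := by
  have h := (parseval e x).tendsto_sum_nat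
  have : Tendsto (fun k => ‖x‖ ^ 2 - S e k x) atTop (𝓝 (‖x‖ ^ 2 - ‖x‖ ^ 2)) :=
    tendsto_const_nhds.sub h
  simpa using this

/-- norm of tail of expansion -/
theorem norm_sub_proj (k : ℕ) (x : H) :
    ‖x - ∑ n ∈ Finset.range k, (inner 𝕜 (e n) x : 𝕜) • e n‖ ^ 2 = ‖x‖ ^ 2 - S e k x := by
  set y := x - ∑ n ∈ Finset.range k, (inner 𝕜 (e n) x : 𝕜) • e n with hy
  have hinner : ∀ n, (inner 𝕜 (e n) y : 𝕜) = if k ≤ n then inner 𝕜 (e n) x else 0 := by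
    intro n
    rw [hy, inner_sub_right, inner_sum]
    have : ∀ m ∈ Finset.range k, (inner 𝕜 (e n) ((inner 𝕜 (e m) x : 𝕜) • e m) : 𝕜)
        = if n = m then (inner 𝕜 (e m) x : 𝕜) else 0 := by
      intro m _
      rw [inner_smul_right, orthonormal_iff_ite.mp e.orthonormal n m]
      by_cases h : n = m <;> simp [h]
    rw [Finset.sum_congr rfl this, Finset.sum_ite_eq]
    by_cases h : k ≤ n
    · simp [Finset.mem_range, not_lt.mpr h, h]
    · simp [Finset.mem_range, not_le.mp h, h]
  have hp := parseval e y
  have hp' : HasSum (fun n => if k ≤ n then ‖(inner 𝕜 (e n) x : 𝕜)‖ ^ 2 else 0) (‖y‖ ^ 2) := by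
    convert hp using 2 with n
    rw [hinner n]
    by_cases h : k ≤ n <;> simp [h]
  exact hp'.unique (hasSum_tail e k x)

/-- uniform smallness of tails on a compact set -/
theorem compact_tail (K : Set H) (hK : IsCompact K) {ε : ℝ} (hε : 0 < ε) :
    ∃ k₀ : ℕ, ∀ k ≥ k₀, ∀ x ∈ K, ‖x‖ ^ 2 - S e k x ≤ ε := by
  have hex : ∀ x : H, ∃ m : ℕ, ‖x‖ ^ 2 - S e m x < ε / 2 := by
    intro x
    have := (tail_tendsto e x).eventually (eventually_lt_nhds (by positivity : (0:ℝ) < ε / 2))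
    exact this.exists
  choose κ hκ using hex
  set U : H → Set H := fun x => {y | ‖y‖ ^ 2 - S e (κ x) y < ε / 2} with hU
  have hUopen : ∀ x, IsOpen (U x) := fun x =>
    isOpen_lt (continuous_tail e (κ x)) continuous_const
  have hmem : ∀ x ∈ K, U x ∈ 𝓝 x := fun x _ =>
    (hUopen x).mem_nhds (hκ x)
  obtain ⟨t, ht⟩ := hK.elim_nhds_subcover U hmem
  refine ⟨t.sup κ, fun k hk x hx => ?_⟩
  obtain ⟨y, hyt, hxy⟩ := Set.mem_iUnion₂.mp (ht.2 hx)
  have h1 : κ y ≤ k := le_trans (Finset.le_sup hyt) hk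
  calc ‖x‖ ^ 2 - S e k x ≤ ‖x‖ ^ 2 - S e (κ y) x := tail_anti e h1 x
    _ ≤ ε := le_of_lt (lt_of_lt_of_le hxy (by linarith))

theorem isClosed_K (h : ℝ) (k : ℕ → ℕ) :
    IsClosed ({x : H | S e (k 0) x ≤ h} ∩
      ⋂ j, {x : H | ‖x‖ ^ 2 - S e (k j) x ≤ 1 / ((j : ℝ) + 1)}) := by
  refine IsClosed.inter (isClosed_le (continuous_S e (k 0)) continuous_const) ?_
  exact isClosed_iInter fun j => isClosed_le (continuous_tail e (k j)) continuous_const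

theorem isCompact_K (h : ℝ) (k : ℕ → ℕ) :
    IsCompact ({x : H | S e (k 0) x ≤ h} ∩
      ⋂ j, {x : H | ‖x‖ ^ 2 - S e (k j) x ≤ 1 / ((j : ℝ) + 1)}) := by
  set K := {x : H | S e (k 0) x ≤ h} ∩
      ⋂ j, {x : H | ‖x‖ ^ 2 - S e (k j) x ≤ 1 / ((j : ℝ) + 1)} with hK
  have hclosed : IsClosed K := by
    refine IsClosed.inter (isClosed_le (continuous_S e (k 0)) continuous_const) ?_
    exact isClosed_iInter fun j => isClosed_le (continuous_tail e (k j)) continuous_const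
  -- norm bound
  set R := Real.sqrt (h + 1) with hR
  have hR0 : 0 ≤ R := Real.sqrt_nonneg _
  have hnorm : ∀ x ∈ K, ‖x‖ ≤ R := by
    intro x hx
    have h1 : S e (k 0) x ≤ h := hx.1
    have h2 : ‖x‖ ^ 2 - S e (k 0) x ≤ 1 := by
      have := Set.mem_iInter.mp hx.2 0
      simpa using this
    have : ‖x‖ ^ 2 ≤ h + 1 := by linarith
    calc ‖x‖ = Real.sqrt (‖x‖ ^ 2) := by rw [Real.sqrt_sq (norm_nonneg x)]
      _ ≤ R := Real.sqrt_le_sqrt this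
  refine TotallyBounded.isCompact_of_isClosed (Metric.totallyBounded_iff.mpr ?_) hclosed
  intro ε hε
  obtain ⟨N, hN⟩ := exists_nat_gt ((2 / ε) ^ 2)
  set m := k N with hm
  -- tail bound on K at level m
  have htail : ∀ x ∈ K, ‖x - ∑ n ∈ Finset.range m, (inner 𝕜 (e n) x : 𝕜) • e n‖ ≤ ε / 2 := by
    intro x hx
    have h2 : ‖x‖ ^ 2 - S e m x ≤ 1 / ((N : ℝ) + 1) := Set.mem_iInter.mp hx.2 N
    have hsq : ‖x - ∑ n ∈ Finset.range m, (inner 𝕜 (e n) x : 𝕜) • e n‖ ^ 2 ≤ (ε / 2) ^ 2 := by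
      rw [norm_sub_proj e m x]
      have hNpos : (0 : ℝ) < (N : ℝ) + 1 := by positivity
      have key : 1 / ((N : ℝ) + 1) ≤ (ε / 2) ^ 2 := by
        rw [div_le_iff₀ hNpos]
        have hmul : (ε / 2) ^ 2 * (2 / ε) ^ 2 = 1 := by
          field_simp
        nlinarith [sq_nonneg (ε / 2), hN, hmul]
      linarith
    nlinarith [norm_nonneg (x - ∑ n ∈ Finset.range m, (inner 𝕜 (e n) x : 𝕜) • e n), hε]
  -- finite-dimensional compact set containing the projections
  set f : (Fin m → 𝕜) → H := fun c => ∑ i, c i • e i with hf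
  have hfc : Continuous f := continuous_finset_sum _ fun i _ => (continuous_apply (i : Fin m)).smul continuous_const
  set C := f '' Metric.closedBall 0 R with hC
  have hCc : IsCompact C := (isCompact_closedBall (0 : Fin m → 𝕜) R).image hfc
  obtain ⟨t, htfin, htc⟩ := Metric.totallyBounded_iff.mp hCc.totallyBounded (ε / 2) (half_pos hε)
  refine ⟨t, htfin, fun x hx => ?_⟩
  have hproj : (∑ n ∈ Finset.range m, (inner 𝕜 (e n) x : 𝕜) • e n) ∈ C := by
    refine ⟨fun i => (inner 𝕜 (e (i : ℕ)) x : 𝕜), ?_, ?_⟩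
    · rw [Metric.mem_closedBall, dist_zero_right]
      refine (pi_norm_le_iff_of_nonneg hR0).mpr fun i => ?_
      calc ‖(inner 𝕜 (e (i : ℕ)) x : 𝕜)‖ ≤ ‖e (i : ℕ)‖ * ‖x‖ := norm_inner_le_norm _ _
        _ = ‖x‖ := by rw [e.orthonormal.1 (i : ℕ), one_mul]
        _ ≤ R := hnorm x hx
    · exact Fin.sum_univ_eq_sum_range (fun n => (inner 𝕜 (e n) x : 𝕜) • e n) m
  obtain ⟨y, hyt, hy⟩ := Set.mem_iUnion₂.mp (htc hproj)
  refine Set.mem_iUnion₂.mpr ⟨y, hyt, ?_⟩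
  rw [Metric.mem_ball] at hy ⊢
  calc dist x y ≤ dist x (∑ n ∈ Finset.range m, (inner 𝕜 (e n) x : 𝕜) • e n)
        + dist (∑ n ∈ Finset.range m, (inner 𝕜 (e n) x : 𝕜) • e n) y := dist_triangle _ _ _
    _ ≤ ε / 2 + dist (∑ n ∈ Finset.range m, (inner 𝕜 (e n) x : 𝕜) • e n) y := by
        rw [dist_eq_norm]; exact add_le_add_left (htail x hx) _
    _ < ε / 2 + ε / 2 := by linarith
    _ = ε := by ring

end Stmt16Aux

open Stmt16Aux

/-- Tightness criterion on a separable Hilbert space with orthonormal basis `(e_n)`: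
a family of Borel probability measures is tight iff the finite-dimensional coordinate masses
are uniformly bounded in probability and the tails `Σ_{n≥k}|⟨x,e_n⟩|²` are uniformly small. -/
theorem stmt16
    {𝕜 : Type*} [RCLike 𝕜]
    {H : Type*} [NormedAddCommGroup H] [InnerProductSpace 𝕜 H] [CompleteSpace H]
    [SecondCountableTopology H] [MeasurableSpace H] [BorelSpace H]
    (e : HilbertBasis ℕ 𝕜 H)
    (P : ℕ → Measure H) [∀ T, IsProbabilityMeasure (P T)] :
    (∀ δ : ℝ, 0 < δ →
        ∃ K : Set H, IsCompact K ∧ ∀ T, ENNReal.ofReal (1 - δ) ≤ P T K) ↔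
      ((∀ k : ℕ,
          Tendsto (fun h : ℝ => ⨆ T, P T
              {x : H | h < ∑ n ∈ Finset.range k, ‖(inner 𝕜 (e n) x : 𝕜)‖ ^ 2})
            atTop (𝓝 0)) ∧
        (∀ ε : ℝ, 0 < ε →
          Tendsto (fun k : ℕ => ⨆ T, P T
              {x : H | ε < ∑' n : ℕ, if k ≤ n then ‖(inner 𝕜 (e n) x : 𝕜)‖ ^ 2 else 0})
            atTop (𝓝 0))) := by
  constructor
  · -- tightness → (i) ∧ (ii)
    intro htight
    -- generic extraction of a compact set with small complement mass
    have hcomp : ∀ ε : ℝ≥0∞, 0 < ε → ∃ K : Set H, IsCompact K ∧ ∀ T, P T Kᶜ ≤ ε := by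
      intro ε hε
      set r := min 1 ε with hr
      have hr0 : 0 < r := lt_min one_pos hε
      have hrt : r ≠ ⊤ := (min_le_left _ _).trans_lt ENNReal.one_lt_top |>.ne
      set δ := r.toReal with hδdef
      have hδ0 : 0 < δ := ENNReal.toReal_pos hr0.ne' hrt
      obtain ⟨K, hKc, hKP⟩ := htight δ hδ0
      refine ⟨K, hKc, fun T => ?_⟩
      have hmeas : MeasurableSet K := hKc.isClosed.measurableSet
      calc P T Kᶜ = 1 - P T K := by
            rw [measure_compl hmeas (measure_ne_top _ _), measure_univ]
        _ ≤ 1 - ENNReal.ofReal (1 - δ) := tsub_le_tsub_left (hKP T) 1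
        _ ≤ ENNReal.ofReal δ := by
            rw [tsub_le_iff_right]
            calc (1 : ℝ≥0∞) = ENNReal.ofReal (δ + (1 - δ)) := by
                  rw [add_sub_cancel, ENNReal.ofReal_one]
              _ ≤ ENNReal.ofReal δ + ENNReal.ofReal (1 - δ) := ENNReal.ofReal_add_le
        _ = r := ENNReal.ofReal_toReal hrt
        _ ≤ ε := min_le_right _ _
    constructor
    · intro k
      rw [ENNReal.tendsto_nhds_zero]
      intro ε hε
      obtain ⟨K, hKc, hKP⟩ := hcomp ε hε
      obtain ⟨R, hR⟩ := (hKc.isBounded).exists_norm_le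
      filter_upwards [eventually_ge_atTop (R ^ 2)] with h hh
      refine iSup_le fun T => ?_
      refine le_trans (measure_mono ?_) (hKP T)
      intro x hx hxK
      have : S e k x ≤ ‖x‖ ^ 2 := S_le e k x
      have hxR : ‖x‖ ≤ R := hR x hxK
      have : S e k x ≤ R ^ 2 := by nlinarith [norm_nonneg x]
      exact absurd hx (not_lt.mpr (this.trans hh))
    · intro εr hεr
      rw [ENNReal.tendsto_nhds_zero]
      intro ε hε
      obtain ⟨K, hKc, hKP⟩ := hcomp ε hε
      obtain ⟨k₀, hk₀⟩ := compact_tail e K hKc hεr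
      filter_upwards [eventually_ge_atTop k₀] with k hk
      refine iSup_le fun T => ?_
      refine le_trans (measure_mono ?_) (hKP T)
      intro x hx hxK
      rw [Set.mem_setOf_eq, tsum_tail e k x] at hx
      exact absurd hx (not_lt.mpr (hk₀ k hk x hxK))
  · -- (i) ∧ (ii) → tightness
    rintro ⟨h1, h2⟩ δ hδ
    set δ' := min δ 1 with hδ'
    have hδ'0 : 0 < δ' := lt_min hδ one_pos
    have hδ'1 : δ' ≤ 1 := min_le_right _ _
    obtain ⟨c, hc0, hcsum⟩ :=
      ENNReal.exists_pos_sum_of_countable' (ENNReal.ofReal_pos.mpr hδ'0).ne' ℕ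
    -- choose k j for the tails
    have hkex : ∀ j : ℕ, ∃ kj : ℕ, (⨆ T, P T
        {x : H | 1 / ((j : ℝ) + 1) <
          ∑' n : ℕ, if kj ≤ n then ‖(inner 𝕜 (e n) x : 𝕜)‖ ^ 2 else 0}) < c (j + 1) := by
      intro j
      have hpos : (0 : ℝ) < 1 / ((j : ℝ) + 1) := by positivity
      exact ((h2 _ hpos).eventually_lt_const (hc0 (j + 1))).exists
    choose k hkP using hkex
    -- choose h for the head
    obtain ⟨h, hhP, hh0⟩ :=
      (((h1 (k 0)).eventually_lt_const (hc0 0)).and (eventually_ge_atTop (0 : ℝ))).exists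
    set K := ({x : H | S e (k 0) x ≤ h} ∩
      ⋂ j, {x : H | ‖x‖ ^ 2 - S e (k j) x ≤ 1 / ((j : ℝ) + 1)}) with hK
    refine ⟨K, isCompact_K e h k, fun T => ?_⟩
    have hKm : MeasurableSet K := (isClosed_K e h k).measurableSet
    -- complement bound
    have hcompl : P T Kᶜ ≤ ENNReal.ofReal δ' := by
      have hsub : Kᶜ ⊆ {x : H | h < S e (k 0) x} ∪
          ⋃ j : ℕ, {x : H | 1 / ((j : ℝ) + 1) < ‖x‖ ^ 2 - S e (k j) x} := by
        rw [hK, Set.compl_inter, Set.compl_iInter]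
        refine Set.union_subset_union ?_ (Set.iUnion_mono fun j => ?_)
        · intro x hx
          rw [Set.mem_compl_iff, Set.mem_setOf_eq, not_le] at hx
          exact hx
        · intro x hx
          rw [Set.mem_compl_iff, Set.mem_setOf_eq, not_le] at hx
          exact hx
      have hA : P T {x : H | h < S e (k 0) x} ≤ c 0 := by
        refine le_trans ?_ hhP.le
        have hAeq : {x : H | h < S e (k 0) x}
            = {x : H | h < ∑ n ∈ Finset.range (k 0), ‖(inner 𝕜 (e n) x : 𝕜)‖ ^ 2} := rfl
        rw [hAeq]
        exact le_iSup (fun T => P T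
          {x : H | h < ∑ n ∈ Finset.range (k 0), ‖(inner 𝕜 (e n) x : 𝕜)‖ ^ 2}) T
      have hB : ∀ j : ℕ,
          P T {x : H | 1 / ((j : ℝ) + 1) < ‖x‖ ^ 2 - S e (k j) x} ≤ c (j + 1) := by
        intro j
        refine le_trans ?_ (hkP j).le
        have hBeq : {x : H | 1 / ((j : ℝ) + 1) < ‖x‖ ^ 2 - S e (k j) x}
            = {x : H | 1 / ((j : ℝ) + 1) <
                ∑' n : ℕ, if k j ≤ n then ‖(inner 𝕜 (e n) x : 𝕜)‖ ^ 2 else 0} := by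
          ext x
          rw [Set.mem_setOf_eq, Set.mem_setOf_eq, tsum_tail e (k j) x]
        rw [hBeq]
        exact le_iSup (fun T => P T
          {x : H | 1 / ((j : ℝ) + 1) <
            ∑' n : ℕ, if k j ≤ n then ‖(inner 𝕜 (e n) x : 𝕜)‖ ^ 2 else 0}) T
      calc P T Kᶜ ≤ P T ({x : H | h < S e (k 0) x} ∪
            ⋃ j : ℕ, {x : H | 1 / ((j : ℝ) + 1) < ‖x‖ ^ 2 - S e (k j) x}) := measure_mono hsub
        _ ≤ P T {x : H | h < S e (k 0) x}
            + P T (⋃ j : ℕ, {x : H | 1 / ((j : ℝ) + 1) < ‖x‖ ^ 2 - S e (k j) x}) :=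
            measure_union_le _ _
        _ ≤ c 0 + ∑' j, c (j + 1) :=
            add_le_add hA (le_trans (measure_iUnion_le _) (ENNReal.tsum_le_tsum hB))
        _ = ∑' j, c j := (tsum_eq_zero_add' ENNReal.summable).symm
        _ ≤ ENNReal.ofReal δ' := hcsum.le
    -- conclude
    have hge : ENNReal.ofReal (1 - δ) ≤ ENNReal.ofReal (1 - δ') :=
      ENNReal.ofReal_le_ofReal (by have := min_le_left δ 1; simp only [hδ']; linarith)
    refine le_trans hge ?_
    have hsum1 : ENNReal.ofReal (1 - δ') + ENNReal.ofReal δ' = 1 := by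
      rw [← ENNReal.ofReal_add (by linarith) hδ'0.le, sub_add_cancel, ENNReal.ofReal_one]
    have h1δ' : ENNReal.ofReal (1 - δ') = 1 - ENNReal.ofReal δ' :=
      ENNReal.eq_sub_of_add_eq (ENNReal.ofReal_ne_top) hsum1
    rw [h1δ']
    calc (1 : ℝ≥0∞) - ENNReal.ofReal δ' ≤ 1 - P T Kᶜ := tsub_le_tsub_left hcompl 1
      _ ≤ P T K := by
          rw [tsub_le_iff_right]
          rw [measure_add_measure_compl hKm, measure_univ]
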